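/- Let A^{(1)}(z), …, A^{(ℓ)}(z) be pairwise mutually local fields on M. Then for every vector u ∈ M there exists an integer n such that A^{(1)}_{p₁} ⋯ A^{(ℓ)}_{p_ℓ} u = 0 whenever p₁ + ⋯ + p_ℓ ≥ n. -/

import Mathlib

open Finset

section VA

variable {k M : Type*} [Field k] [CharZero k] [AddCommGroup M] [Module k M]

/-- Generalized binomial coefficient `C(n,i)` for `n : ℤ`, `i : ℕ`. -/
def ichoose (n : ℤ) (i : ℕ) : ℤ :=
  if 0 ≤ n then (n.toNat.choose i : ℤ)
  else (-1) ^ i * ((((i : ℤ) - 1 - n).toNat.choose i : ℤ))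

/-- `(-1)^m` for an integer `m`. -/
def msign (m : ℤ) : ℤ := if Even m then 1 else -1

/-- A series on `M`, given by its Fourier modes `A_n`. -/
abbrev Ser (M : Type*) : Type _ := ℤ → M → M

/-- `A(z)` is a field: modes applied to any vector vanish for large index. -/
def IsFieldSer (A : Ser M) : Prop := ∀ v : M, ∃ n₀ : ℤ, ∀ n ≥ n₀, A n v = 0

/-- All modes are `k`-linear, i.e. the coefficients are endomorphisms of the
vector space `M`. -/
def IsLinSer (A : Ser M) : Prop := ∀ n : ℤ, IsLinearMap k (A n)

/-- Residual `m`-th product, in Fourier modes: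
`(A_(m)B)_n = ∑_{i≥0} (-1)^i C(m,i) (A_{m-i} B_{n+i} - (-1)^m B_{m+n-i} A_i)`. -/
noncomputable def resProd (A B : Ser M) (m : ℤ) : Ser M := fun n v =>
  ∑ᶠ i : ℕ, ((-1 : ℤ) ^ i * ichoose m i) •
    (A (m - (i : ℤ)) (B (n + (i : ℤ)) v) - msign m • B (m + n - (i : ℤ)) (A (i : ℤ) v))

/-- Mutual locality at order `n`, in Fourier modes:
`∑_{i=0}^n (-1)^i C(n,i) (A_{p+n-i} B_{q+i} - (-1)^n B_{q+n-i} A_{p+i}) = 0`. -/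
def IsLocalAt (A B : Ser M) (n : ℕ) : Prop :=
  ∀ (p q : ℤ) (v : M),
    ∑ i ∈ Finset.range (n + 1), ((-1 : ℤ) ^ i * (n.choose i : ℤ)) •
      (A (p + (n : ℤ) - (i : ℤ)) (B (q + (i : ℤ)) v)
        - (-1 : ℤ) ^ n • B (q + (n : ℤ) - (i : ℤ)) (A (p + (i : ℤ)) v)) = 0

/-- `A` and `B` are mutually local of order exactly `n₀`. -/
def HasOrder (A B : Ser M) (n₀ : ℕ) : Prop :=
  IsLocalAt A B n₀ ∧ ∀ n : ℕ, IsLocalAt A B n → n₀ ≤ n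

/-- The identity field `I(z) = id`. -/
def idSer : Ser M := fun n v => if n = -1 then v else 0

/-- Derivative of a series: `(∂A)_n = -n A_{n-1}`. -/
def dSer (A : Ser M) : Ser M := fun n v => (-n) • A (n - 1) v

/-- Divided-power derivative: `(∂^{(i)}A)_n = (-1)^i C(n,i) A_{n-i}`. -/
def dpowSer (i : ℕ) (A : Ser M) : Ser M := fun n v =>
  ((-1 : ℤ) ^ i * ichoose n i) • A (n - (i : ℤ)) v

/-- Normally ordered product `:A(z)B(z): = A(z)₋B(z) + B(z)A(z)₊`, in modes. -/
noncomputable def noProd (A B : Ser M) : Ser M := fun n v =>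
  (∑ᶠ i : ℕ, A (-(i : ℤ) - 1) (B (n + (i : ℤ)) v)) + ∑ᶠ i : ℕ, B (n - 1 - (i : ℤ)) (A (i : ℤ) v)


namespace Stmt9Aux

set_option linter.unusedSectionVars false in
section
variable {l : ℕ}

/-- Apply the modes `A i (p i)` for `i` along the list `s`, innermost last. -/
def chainApp (A : Fin l → Ser M) (s : List (Fin l)) (p : Fin l → ℤ) (v : M) : M :=
  s.foldr (fun i w => A i (p i) w) v

@[simp] lemma chainApp_nil (A : Fin l → Ser M) (p : Fin l → ℤ) (v : M) :
    chainApp A [] p v = v := rfl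

@[simp] lemma chainApp_cons (A : Fin l → Ser M) (i : Fin l) (s : List (Fin l))
    (p : Fin l → ℤ) (v : M) :
    chainApp A (i :: s) p v = A i (p i) (chainApp A s p v) := rfl

lemma chainApp_append (A : Fin l → Ser M) (s t : List (Fin l)) (p : Fin l → ℤ) (v : M) :
    chainApp A (s ++ t) p v = chainApp A s p (chainApp A t p v) := by
  simp [chainApp, List.foldr_append]

lemma chainApp_congr (A : Fin l → Ser M) {s : List (Fin l)} {p q : Fin l → ℤ} (v : M)
    (h : ∀ i ∈ s, p i = q i) : chainApp A s p v = chainApp A s q v := by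
  induction s with
  | nil => rfl
  | cons a t ih =>
      simp only [chainApp_cons]
      rw [h a (by simp), ih (fun i hi => h i (by simp [hi]))]

variable {A : Fin l → Ser M}

lemma chainApp_zero (hlA : ∀ i, IsLinSer (k := k) (A i)) (s : List (Fin l)) (p : Fin l → ℤ) :
    chainApp A s p (0 : M) = 0 := by
  induction s with
  | nil => rfl
  | cons a t ih => simp [chainApp_cons, ih, (hlA a (p a)).map_zero]

lemma map_comb (hlA : ∀ i, IsLinSer (k := k) (A i)) (i : Fin l) (nn : ℤ) {ι : Type*}
    (T : Finset ι) (c : ι → ℤ) (x : ι → M) :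
    A i nn (∑ t ∈ T, c t • x t) = ∑ t ∈ T, c t • A i nn (x t) := by
  have h : A i nn = (IsLinearMap.mk' _ (hlA i nn) : M →ₗ[k] M) := rfl
  rw [h, map_sum]
  exact Finset.sum_congr rfl fun t _ => map_zsmul _ _ _

lemma chainApp_comb (hlA : ∀ i, IsLinSer (k := k) (A i)) (s : List (Fin l)) (p : Fin l → ℤ)
    {ι : Type*} (T : Finset ι) (c : ι → ℤ) (x : ι → M) :
    chainApp A s p (∑ t ∈ T, c t • x t) = ∑ t ∈ T, c t • chainApp A s p (x t) := by
  induction s with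
  | nil => rfl
  | cons a t ih =>
      rw [chainApp_cons, ih, map_comb hlA]
      exact Finset.sum_congr rfl fun t _ => rfl

/-- The operator `z_i - z_j` acting on mode families. -/
def Tpair (e : Fin l × Fin l) (F : (Fin l → ℤ) → M) : (Fin l → ℤ) → M :=
  fun p => F (p + Pi.single e.1 1) - F (p + Pi.single e.2 1)

/-- Iterated `Tpair` over a list of pairs. -/
def TL (L : List (Fin l × Fin l)) (F : (Fin l → ℤ) → M) : (Fin l → ℤ) → M :=
  L.foldr Tpair F

@[simp] lemma TL_nil (F : (Fin l → ℤ) → M) : TL [] F = F := rfl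

@[simp] lemma TL_cons (e : Fin l × Fin l) (L : List (Fin l × Fin l)) (F : (Fin l → ℤ) → M) :
    TL (e :: L) F = Tpair e (TL L F) := rfl

lemma TL_append (L₁ L₂ : List (Fin l × Fin l)) (F : (Fin l → ℤ) → M) :
    TL (L₁ ++ L₂) F = TL L₁ (TL L₂ F) := List.foldr_append

lemma Tpair_comm (e e' : Fin l × Fin l) (F : (Fin l → ℤ) → M) :
    Tpair e (Tpair e' F) = Tpair e' (Tpair e F) := by
  funext p
  simp only [Tpair]
  have h : ∀ x y : Fin l → ℤ, p + x + y = p + y + x := fun x y => add_right_comm p x y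
  rw [h (Pi.single e'.1 1) (Pi.single e.1 1), h (Pi.single e'.1 1) (Pi.single e.2 1),
    h (Pi.single e'.2 1) (Pi.single e.1 1), h (Pi.single e'.2 1) (Pi.single e.2 1)]
  abel

lemma TL_perm {L L' : List (Fin l × Fin l)} (h : L.Perm L') (F : (Fin l → ℤ) → M) :
    TL L F = TL L' F := by
  induction h with
  | nil => rfl
  | cons e _ ih => simp [TL_cons, ih]
  | swap x y L => simp [TL_cons, Tpair_comm]
  | trans _ _ ih1 ih2 => rw [ih1, ih2]

lemma single_one_nonneg (a i : Fin l) : (0 : ℤ) ≤ (Pi.single a 1 : Fin l → ℤ) i := by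
  rcases eq_or_ne i a with h | h
  · subst h; simp
  · simp [Pi.single_eq_of_ne h]

lemma TL_vanish_coord {F : (Fin l → ℤ) → M} {i : Fin l} {c : ℤ}
    (h : ∀ p, c ≤ p i → F p = 0) (L : List (Fin l × Fin l)) :
    ∀ p, c ≤ p i → TL L F p = 0 := by
  induction L with
  | nil => exact h
  | cons e L ih =>
      intro p hp
      have h1 : TL L F (p + Pi.single e.1 1) = 0 := by
        refine ih _ ?_
        have := single_one_nonneg e.1 i
        simp only [Pi.add_apply]; linarith
      have h2 : TL L F (p + Pi.single e.2 1) = 0 := by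
        refine ih _ ?_
        have := single_one_nonneg e.2 i
        simp only [Pi.add_apply]; linarith
      simp [TL_cons, Tpair, h1, h2]

/-- Support condition: for each coordinate `j`, fixing the coordinates above `j`,
the value vanishes for large `j`-th coordinate. -/
def SuppCond (F : (Fin l → ℤ) → M) : Prop :=
  ∀ (j : Fin l) (p : Fin l → ℤ), ∃ B : ℤ, ∀ q : Fin l → ℤ,
    (∀ kk, j < kk → q kk = p kk) → B ≤ q j → F q = 0

lemma SuppCond.tpair {F : (Fin l → ℤ) → M} (hs : SuppCond F) (e : Fin l × Fin l) :
    SuppCond (Tpair e F) := by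
  intro j p
  obtain ⟨B₁, hB₁⟩ := hs j (p + Pi.single e.1 1)
  obtain ⟨B₂, hB₂⟩ := hs j (p + Pi.single e.2 1)
  refine ⟨max B₁ B₂, fun q hq hqj => ?_⟩
  have h1 : F (q + Pi.single e.1 1) = 0 := by
    refine hB₁ _ (fun kk hkk => by simp [hq kk hkk]) ?_
    have h := single_one_nonneg e.1 j
    have h' := le_max_left B₁ B₂
    simp only [Pi.add_apply]
    linarith
  have h2 : F (q + Pi.single e.2 1) = 0 := by
    refine hB₂ _ (fun kk hkk => by simp [hq kk hkk]) ?_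
    have h := single_one_nonneg e.2 j
    have h' := le_max_right B₁ B₂
    simp only [Pi.add_apply]
    linarith
  simp [Tpair, h1, h2]

lemma SuppCond.tl {F : (Fin l → ℤ) → M} (hs : SuppCond F) (L : List (Fin l × Fin l)) :
    SuppCond (TL L F) := by
  induction L with
  | nil => exact hs
  | cons e L ih => exact ih.tpair e

lemma sum_single (a : Fin l) (c : ℤ) : ∑ i, (Pi.single a c : Fin l → ℤ) i = c := by
  rw [Finset.sum_pi_single' a c Finset.univ]
  simp

/-- Dividing by one factor `z_a - z_b`, `a < b`. -/
lemma peel {F : (Fin l → ℤ) → M} {a b : Fin l} (hab : a < b) (hs : SuppCond F) {N : ℤ}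
    (h : ∀ p, N ≤ ∑ i, p i → Tpair (a, b) F p = 0) :
    ∀ p, N + 1 ≤ ∑ i, p i → F p = 0 := by
  intro q hq
  obtain ⟨B, hB⟩ := hs b q
  have hne : a ≠ b := ne_of_lt hab
  have key : ∀ t : ℕ,
      F (q + Pi.single b (t : ℤ) - Pi.single a (t : ℤ)) = F q := by
    intro t
    induction t with
    | zero => simp
    | succ t ih =>
        have hsum : N ≤ ∑ i : Fin l,
            (q + Pi.single b (t : ℤ) - Pi.single a ((t : ℤ) + 1) : Fin l → ℤ) i := by
          simp only [Pi.add_apply, Pi.sub_apply]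
          rw [Finset.sum_sub_distrib, Finset.sum_add_distrib, sum_single, sum_single]
          linarith
        have h0 := h _ hsum
        simp only [Tpair] at h0
        have e1 : q + Pi.single b (t : ℤ) - Pi.single a ((t : ℤ) + 1) + Pi.single a 1
            = q + Pi.single b (t : ℤ) - Pi.single a (t : ℤ) := by
          rw [Pi.single_add]; abel
        have e2 : q + Pi.single b (t : ℤ) - Pi.single a ((t : ℤ) + 1) + Pi.single b 1
            = q + Pi.single b ((t : ℤ) + 1) - Pi.single a ((t : ℤ) + 1) := by
          rw [show (Pi.single b ((t : ℤ) + 1) : Fin l → ℤ)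
            = Pi.single b (t : ℤ) + Pi.single b 1 from Pi.single_add b _ _]
          abel
        rw [e1, e2, sub_eq_zero] at h0
        have hc : ((t : ℤ) + 1) = ((t + 1 : ℕ) : ℤ) := by push_cast; ring
        rw [hc] at h0
        rw [← h0, ih]
  set t : ℕ := (B - q b).toNat with ht
  have hqt : F (q + Pi.single b (t : ℤ) - Pi.single a (t : ℤ)) = 0 := by
    refine hB _ (fun kk hkk => ?_) ?_
    · have hkb : kk ≠ b := ne_of_gt hkk
      have hka : kk ≠ a := ne_of_gt (lt_trans hab hkk)
      simp [Pi.single_eq_of_ne hkb, Pi.single_eq_of_ne hka]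
    · simp only [Pi.add_apply, Pi.sub_apply, Pi.single_eq_same, Pi.single_eq_of_ne hne.symm]
      have := Int.self_le_toNat (B - q b)
      rw [← ht] at this
      linarith
  rw [← key t, hqt]

lemma peel_list {F : (Fin l → ℤ) → M} {L : List (Fin l × Fin l)}
    (hL : ∀ e ∈ L, e.1 < e.2) (hs : SuppCond F) {N : ℤ}
    (h : ∀ p, N ≤ ∑ i, p i → TL L F p = 0) :
    ∀ p, N + L.length ≤ ∑ i, p i → F p = 0 := by
  induction L generalizing N with
  | nil => intro p hp; exact h p (by simpa using hp)
  | cons e L ih =>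
      have hpeel : ∀ p, N + 1 ≤ ∑ i, p i → TL L F p = 0 := by
        have he : e.1 < e.2 := hL e (by simp)
        refine peel he (hs.tl L) (fun p hp => ?_)
        have hh : Tpair (e.1, e.2) (TL L F) = TL (e :: L) F := rfl
        rw [hh]
        exact h p hp
      have := ih (fun e' he' => hL e' (by simp [he'])) hpeel
      intro p hp
      refine this p ?_
      simp only [List.length_cons] at hp ⊢
      push_cast at hp ⊢
      linarith

lemma TL_replicate (a b : Fin l) (F : (Fin l → ℤ) → M) :
    ∀ (n : ℕ) (p : Fin l → ℤ),
      TL (List.replicate n (a, b)) F p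
        = ∑ t ∈ Finset.range (n + 1),
            ((-1 : ℤ) ^ t * (n.choose t : ℤ)) •
              F (p + Pi.single a ((n : ℤ) - t) + Pi.single b (t : ℤ)) := by
  intro n
  induction n with
  | zero =>
      intro p
      simp [TL]
  | succ n ih =>
      intro p
      have hrep : TL (List.replicate (n + 1) (a, b)) F
          = Tpair (a, b) (TL (List.replicate n (a, b)) F) := by
        rw [List.replicate_succ]; rfl
      rw [hrep]
      show TL (List.replicate n (a, b)) F (p + Pi.single a 1)
          - TL (List.replicate n (a, b)) F (p + Pi.single b 1) = _
      rw [ih, ih]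
      set G : ℕ → M := fun t =>
        F (p + Pi.single a (((n : ℤ) + 1) - t) + Pi.single b (t : ℤ)) with hG
      have hpt1 : ∀ t : ℕ,
          p + Pi.single a 1 + Pi.single a ((n : ℤ) - t) + Pi.single b (t : ℤ)
            = p + Pi.single a (((n : ℤ) + 1) - t) + Pi.single b (t : ℤ) := by
        intro t
        have hs : (Pi.single a (((n : ℤ) + 1) - t) : Fin l → ℤ)
            = Pi.single a 1 + Pi.single a ((n : ℤ) - t) := by
          rw [← Pi.single_add]
          congr 1
          ring
        rw [hs]; abel
      have hpt2 : ∀ t : ℕ,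
          p + Pi.single b 1 + Pi.single a ((n : ℤ) - t) + Pi.single b (t : ℤ)
            = p + Pi.single a (((n : ℤ) + 1) - ((t : ℤ) + 1)) + Pi.single b ((t : ℤ) + 1) := by
        intro t
        have h1 : (Pi.single b ((t : ℤ) + 1) : Fin l → ℤ)
            = Pi.single b 1 + Pi.single b (t : ℤ) := by
          rw [← Pi.single_add]; congr 1; ring
        have h2 : ((n : ℤ) + 1) - ((t : ℤ) + 1) = (n : ℤ) - t := by ring
        rw [h1, h2]; abel
      have hS1 : ∑ t ∈ Finset.range (n + 1), ((-1 : ℤ) ^ t * (n.choose t : ℤ)) •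
            F (p + Pi.single a 1 + Pi.single a ((n : ℤ) - t) + Pi.single b (t : ℤ))
          = ∑ t ∈ Finset.range (n + 1), ((-1 : ℤ) ^ t * (n.choose t : ℤ)) • G t := by
        refine Finset.sum_congr rfl fun t _ => ?_
        rw [hpt1 t]
      have hS2 : ∑ t ∈ Finset.range (n + 1), ((-1 : ℤ) ^ t * (n.choose t : ℤ)) •
            F (p + Pi.single b 1 + Pi.single a ((n : ℤ) - t) + Pi.single b (t : ℤ))
          = ∑ t ∈ Finset.range (n + 1), ((-1 : ℤ) ^ t * (n.choose t : ℤ)) • G (t + 1) := by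
        refine Finset.sum_congr rfl fun t _ => ?_
        rw [hpt2 t]
        simp only [hG]
        norm_num
      rw [hS1, hS2]
      have hRHS : ∑ t ∈ Finset.range (n + 1 + 1),
            ((-1 : ℤ) ^ t * ((n + 1).choose t : ℤ)) •
              F (p + Pi.single a (((n + 1 : ℕ) : ℤ) - t) + Pi.single b (t : ℤ))
          = ∑ t ∈ Finset.range (n + 1 + 1), ((-1 : ℤ) ^ t * ((n + 1).choose t : ℤ)) • G t := by
        refine Finset.sum_congr rfl fun t _ => ?_
        simp only [hG]
        push_cast
        try ring_nf
      rw [hRHS]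
      rw [Finset.sum_range_succ' (fun t => ((-1 : ℤ) ^ t * ((n + 1).choose t : ℤ)) • G t) (n + 1)]
      have hsplit : ∀ t : ℕ, ((-1 : ℤ) ^ (t + 1) * ((n + 1).choose (t + 1) : ℤ)) • G (t + 1)
          = (-1 : ℤ) • (((-1 : ℤ) ^ t * (n.choose t : ℤ)) • G (t + 1))
            + ((-1 : ℤ) ^ (t + 1) * (n.choose (t + 1) : ℤ)) • G (t + 1) := by
        intro t
        rw [Nat.choose_succ_succ]
        push_cast
        rw [smul_smul, ← add_smul]
        congr 1
        ring
      rw [Finset.sum_congr rfl fun t _ => hsplit t]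
      rw [Finset.sum_add_distrib]
      rw [← Finset.smul_sum]
      have htail : ∑ t ∈ Finset.range (n + 1),
            ((-1 : ℤ) ^ (t + 1) * (n.choose (t + 1) : ℤ)) • G (t + 1)
          = ∑ t ∈ Finset.range (n + 1), ((-1 : ℤ) ^ t * (n.choose t : ℤ)) • G t
            - ((-1 : ℤ) ^ 0 * (n.choose 0 : ℤ)) • G 0 := by
        have hsr := Finset.sum_range_succ' (fun t => ((-1 : ℤ) ^ t * (n.choose t : ℤ)) • G t) n
        have hlast : ∑ t ∈ Finset.range (n + 1),
              ((-1 : ℤ) ^ (t + 1) * (n.choose (t + 1) : ℤ)) • G (t + 1)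
            = ∑ t ∈ Finset.range n,
              ((-1 : ℤ) ^ (t + 1) * (n.choose (t + 1) : ℤ)) • G (t + 1) := by
          rw [Finset.sum_range_succ]
          simp [Nat.choose_succ_self]
        rw [hlast, hsr]
        abel
      rw [htail]
      simp only [pow_zero, Nat.choose_zero_right, Nat.cast_one, one_mul]
      abel

/-- The key locality swap: under `(z_a - z_b)^n`, adjacent `a, b` in the chain may
be exchanged. -/
lemma swap_adjacent {A : Fin l → Ser M} (hlA : ∀ i, IsLinSer (k := k) (A i))
    {a b : Fin l} (hab : a ≠ b) {n : ℕ} (hl : IsLocalAt (A a) (A b) n)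
    (s₁ s₂ : List (Fin l)) (ha₁ : a ∉ s₁) (hb₁ : b ∉ s₁) (ha₂ : a ∉ s₂) (hb₂ : b ∉ s₂)
    (u : M) :
    TL (List.replicate n (a, b)) (fun p => chainApp A (s₁ ++ a :: b :: s₂) p u)
      = TL (List.replicate n (a, b)) (fun p => chainApp A (s₁ ++ b :: a :: s₂) p u) := by
  funext p
  rw [TL_replicate, TL_replicate]
  set q : ℕ → (Fin l → ℤ) := fun t => p + Pi.single a ((n : ℤ) - t) + Pi.single b (t : ℤ)
    with hq
  have hqa : ∀ t : ℕ, q t a = p a + ((n : ℤ) - t) := by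
    intro t
    simp [hq, Pi.single_eq_same, Pi.single_eq_of_ne hab]
  have hqb : ∀ t : ℕ, q t b = p b + (t : ℤ) := by
    intro t
    simp [hq, Pi.single_eq_same, Pi.single_eq_of_ne hab.symm]
  have hqother : ∀ (t : ℕ) (i : Fin l), i ≠ a → i ≠ b → q t i = p i := by
    intro t i hia hib
    simp [hq, Pi.single_eq_of_ne hia, Pi.single_eq_of_ne hib]
  set v : M := chainApp A s₂ p u with hv
  have hv2 : ∀ t : ℕ, chainApp A s₂ (q t) u = v := by
    intro t
    exact chainApp_congr A u fun i hi =>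
      (hqother t i (fun h => ha₂ (h ▸ hi)) (fun h => hb₂ (h ▸ hi)))
  have houter : ∀ (t : ℕ) (w : M), chainApp A s₁ (q t) w = chainApp A s₁ p w := by
    intro t w
    exact chainApp_congr A w fun i hi =>
      (hqother t i (fun h => ha₁ (h ▸ hi)) (fun h => hb₁ (h ▸ hi)))
  have hLHS : ∀ t : ℕ, chainApp A (s₁ ++ a :: b :: s₂) (q t) u
      = chainApp A s₁ p (A a (p a + ((n : ℤ) - t)) (A b (p b + t) v)) := by
    intro t
    rw [chainApp_append, chainApp_cons, chainApp_cons, hv2 t, hqa t, hqb t, houter t]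
  have hRHS : ∀ t : ℕ, chainApp A (s₁ ++ b :: a :: s₂) (q t) u
      = chainApp A s₁ p (A b (p b + t) (A a (p a + ((n : ℤ) - t)) v)) := by
    intro t
    rw [chainApp_append, chainApp_cons, chainApp_cons, hv2 t, hqa t, hqb t, houter t]
  calc ∑ t ∈ Finset.range (n + 1), ((-1 : ℤ) ^ t * (n.choose t : ℤ)) •
          chainApp A (s₁ ++ a :: b :: s₂) (q t) u
      = chainApp A s₁ p (∑ t ∈ Finset.range (n + 1), ((-1 : ℤ) ^ t * (n.choose t : ℤ)) •
          A a (p a + ((n : ℤ) - t)) (A b (p b + t) v)) := by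
        rw [chainApp_comb hlA]
        exact Finset.sum_congr rfl fun t _ => by rw [hLHS t]
    _ = chainApp A s₁ p (∑ t ∈ Finset.range (n + 1), ((-1 : ℤ) ^ t * (n.choose t : ℤ)) •
          A b (p b + t) (A a (p a + ((n : ℤ) - t)) v)) := by
        congr 1
        have hloc := hl (p a) (p b) v
        simp only [smul_sub, Finset.sum_sub_distrib, sub_eq_zero] at hloc
        simp only [← add_sub_assoc]
        rw [hloc]
        rw [← Finset.sum_range_reflect (fun t => ((-1 : ℤ) ^ t * (n.choose t : ℤ)) •
          A b (p b + (t : ℤ)) (A a (p a + (n : ℤ) - (t : ℤ)) v)) (n + 1)]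
        refine Finset.sum_congr rfl fun t ht => ?_
        have htn : t ≤ n := Nat.lt_succ_iff.mp (Finset.mem_range.mp ht)
        rw [show n + 1 - 1 - t = n - t from rfl]
        have hc2 : ((n - t : ℕ) : ℤ) = (n : ℤ) - t := Nat.cast_sub htn
        rw [hc2]
        have hc3 : p a + (n : ℤ) - ((n : ℤ) - (t : ℤ)) = p a + (t : ℤ) := by ring
        rw [hc3]
        rw [Nat.choose_symm htn]
        rw [← add_sub_assoc]
        rw [smul_smul]
        congr 1
        have h4 : ((-1 : ℤ)) ^ (n - t) * (-1 : ℤ) ^ t = (-1 : ℤ) ^ n := by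
          rw [← pow_add, Nat.sub_add_cancel htn]
        have h5 : ((-1 : ℤ) ^ t) * ((-1 : ℤ) ^ t) = 1 := by
          rw [← pow_add, ← two_mul, pow_mul]
          norm_num
        calc (-1 : ℤ) ^ t * (n.choose t : ℤ) * (-1 : ℤ) ^ n
            = (-1 : ℤ) ^ t * (n.choose t : ℤ) * ((-1 : ℤ) ^ (n - t) * (-1 : ℤ) ^ t) := by
              rw [h4]
          _ = ((-1 : ℤ) ^ t * (-1 : ℤ) ^ t) * ((-1 : ℤ) ^ (n - t) * (n.choose t : ℤ)) := by
              ring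
          _ = (-1 : ℤ) ^ (n - t) * (n.choose t : ℤ) := by rw [h5, one_mul]
    _ = ∑ t ∈ Finset.range (n + 1), ((-1 : ℤ) ^ t * (n.choose t : ℤ)) •
          chainApp A (s₁ ++ b :: a :: s₂) (q t) u := by
        rw [chainApp_comb hlA]
        exact Finset.sum_congr rfl fun t _ => by rw [hRHS t]


lemma supp_chain {A : Fin l → Ser M} (hA : ∀ i, IsFieldSer (A i))
    (hlA : ∀ i, IsLinSer (k := k) (A i)) (u : M) :
    ∀ (s : List (Fin l)), s.Pairwise (· < ·) → ∀ j ∈ s, ∀ (p : Fin l → ℤ),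
      ∃ B : ℤ, ∀ q : Fin l → ℤ, (∀ kk, j < kk → q kk = p kk) → B ≤ q j →
        chainApp A s q u = 0 := by
  intro s
  induction s with
  | nil => intro _ j hj; exact absurd hj (by simp)
  | cons a t ih =>
      intro hpw j hj p
      rcases List.mem_cons.mp hj with rfl | hjt
      · obtain ⟨B, hB⟩ := hA j (chainApp A t p u)
        refine ⟨B, fun q hq hqj => ?_⟩
        have ht' : chainApp A t q u = chainApp A t p u := by
          refine chainApp_congr A u fun i hi => hq i ?_
          exact (List.pairwise_cons.mp hpw).1 i hi
        rw [chainApp_cons, ht']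
        exact hB _ hqj
      · obtain ⟨B, hB⟩ := ih (List.pairwise_cons.mp hpw).2 j hjt p
        refine ⟨B, fun q hq hqj => ?_⟩
        rw [chainApp_cons, hB q hq hqj, (hlA a (q a)).map_zero]

lemma move_to_end {A : Fin l → Ser M} (hlA : ∀ i, IsLinSer (k := k) (A i))
    (L : List (Fin l × Fin l)) (u : M)
    (hLfull : ∀ a b : Fin l, a < b → ∃ (n : ℕ) (L' : List (Fin l × Fin l)),
      IsLocalAt (A a) (A b) n ∧ L.Perm (L' ++ List.replicate n (a, b))) :
    ∀ (s₂ s₁ : List (Fin l)) (i : Fin l), (s₁ ++ i :: s₂).Nodup →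
      TL L (fun p => chainApp A (s₁ ++ i :: s₂) p u)
        = TL L (fun p => chainApp A ((s₁ ++ s₂) ++ [i]) p u) := by
  intro s₂
  induction s₂ with
  | nil => intro s₁ i _; simp
  | cons b s₂ ih =>
      intro s₁ i hnd
      have hnr : (i :: b :: s₂).Nodup := hnd.of_append_right
      have hdisj := List.disjoint_of_nodup_append hnd
      have hib : i ≠ b := by
        intro h
        rw [List.nodup_cons] at hnr
        exact hnr.1 (by simp [h])
      have hi2 : i ∉ s₂ := by
        rw [List.nodup_cons] at hnr
        exact fun h => hnr.1 (by simp [h])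
      have hb2 : b ∉ s₂ := by
        rw [List.nodup_cons, List.nodup_cons] at hnr
        exact hnr.2.1
      have hi1 : i ∉ s₁ := fun h => hdisj h (by simp)
      have hb1 : b ∉ s₁ := fun h => hdisj h (by simp)
      have hswap : TL L (fun p => chainApp A (s₁ ++ i :: b :: s₂) p u)
          = TL L (fun p => chainApp A (s₁ ++ b :: i :: s₂) p u) := by
        rcases lt_or_gt_of_ne hib with hlt | hgt
        · obtain ⟨n, L', hl, hperm⟩ := hLfull i b hlt
          rw [TL_perm hperm, TL_perm hperm, TL_append, TL_append]
          exact congrArg (TL L') (swap_adjacent hlA hib hl s₁ s₂ hi1 hb1 hi2 hb2 u)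
        · obtain ⟨n, L', hl, hperm⟩ := hLfull b i hgt
          rw [TL_perm hperm, TL_perm hperm, TL_append, TL_append]
          exact congrArg (TL L')
            (swap_adjacent hlA hib.symm hl s₁ s₂ hb1 hi1 hb2 hi2 u).symm
      rw [hswap]
      have heq1 : s₁ ++ b :: i :: s₂ = (s₁ ++ [b]) ++ i :: s₂ := by simp
      have hnd2 : ((s₁ ++ [b]) ++ i :: s₂).Nodup := by
        rw [← heq1]
        refine (List.Perm.nodup ?_ hnd)
        exact List.Perm.append_left s₁ (List.Perm.swap b i s₂)
      rw [heq1, ih (s₁ ++ [b]) i hnd2]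
      have heq2 : ((s₁ ++ [b]) ++ s₂) ++ [i] = (s₁ ++ b :: s₂) ++ [i] := by simp
      rw [heq2]

lemma bridge {l : ℕ} (g : Fin l → M → M) (u : M) :
    ∀ s : List (Fin l),
      ((s.map g).foldr (fun f h => f ∘ h) id) u = s.foldr (fun i w => g i w) u := by
  intro s
  induction s with
  | nil => rfl
  | cons a t ih =>
      simp only [List.map_cons, List.foldr_cons, Function.comp_apply, ih]

end
end Stmt9Aux

/-- For pairwise mutually local fields `A 0, …, A (l-1)` and any vector `u` there is an
integer `n` such that `A 0 (p 0) (⋯ (A (l-1) (p (l-1)) u)) = 0` whenever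
`p 0 + ⋯ + p (l-1) ≥ n`. -/
theorem stmt9 (l : ℕ) (A : Fin l → Ser M)
    (hA : ∀ i, IsFieldSer (A i)) (hlA : ∀ i, IsLinSer (k := k) (A i))
    (hloc : ∀ i j : Fin l, i < j → ∃ m : ℕ, IsLocalAt (A i) (A j) m) :
    ∀ u : M, ∃ n : ℤ, ∀ p : Fin l → ℤ, n ≤ ∑ i, p i →
      (List.ofFn fun i => A i (p i)).foldr (fun f g => f ∘ g) id u = 0 := by
  intro u
  classical
  choose n₀ hn₀ using fun i => hA i u
  have hmex : ∀ e : Fin l × Fin l, ∃ n : ℕ, e.1 < e.2 → IsLocalAt (A e.1) (A e.2) n := by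
    intro e
    by_cases h : e.1 < e.2
    · obtain ⟨m, hm⟩ := hloc e.1 e.2 h
      exact ⟨m, fun _ => hm⟩
    · exact ⟨0, fun h' => absurd h' h⟩
  choose m hm using hmex
  set PL : List (Fin l × Fin l) :=
    ((List.finRange l).product (List.finRange l)).filter (fun e => decide (e.1 < e.2)) with hPL
  set L : List (Fin l × Fin l) := PL.flatMap (fun e => List.replicate (m e) e) with hL
  have hmemPL : ∀ e : Fin l × Fin l, e ∈ PL ↔ e.1 < e.2 := by
    rintro ⟨a, b⟩
    simp [hPL, List.mem_filter, List.pair_mem_product, List.mem_finRange]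
  have hLord : ∀ e ∈ L, e.1 < e.2 := by
    intro e he
    rw [hL, List.mem_flatMap] at he
    obtain ⟨e', he', hrep⟩ := he
    rw [List.eq_of_mem_replicate hrep]
    exact (hmemPL e').mp he'
  have hLfull : ∀ a b : Fin l, a < b → ∃ (n : ℕ) (L' : List (Fin l × Fin l)),
      IsLocalAt (A a) (A b) n ∧ L.Perm (L' ++ List.replicate n (a, b)) := by
    intro a b hab
    have hmem : (a, b) ∈ PL := (hmemPL _).mpr hab
    obtain ⟨u1, u2, hsplit⟩ := List.append_of_mem hmem
    refine ⟨m (a, b), u1.flatMap (fun e => List.replicate (m e) e)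
      ++ u2.flatMap (fun e => List.replicate (m e) e), hm (a, b) hab, ?_⟩
    rw [hL, hsplit, List.flatMap_append, List.flatMap_cons]
    refine (List.Perm.append_left _ List.perm_append_comm).trans ?_
    rw [List.append_assoc]
  set F : (Fin l → ℤ) → M := fun p => Stmt9Aux.chainApp A (List.finRange l) p u with hF
  have hsupp : Stmt9Aux.SuppCond F := by
    intro j p
    exact Stmt9Aux.supp_chain hA hlA u (List.finRange l)
      (List.pairwise_lt_finRange l) j (List.mem_finRange j) p
  have hcoord : ∀ i : Fin l, ∀ p : Fin l → ℤ, n₀ i ≤ p i → Stmt9Aux.TL L F p = 0 := by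
    intro i
    obtain ⟨s₁, s₂, hsplit⟩ := List.append_of_mem (List.mem_finRange i)
    have hnd : (s₁ ++ i :: s₂).Nodup := hsplit ▸ List.nodup_finRange l
    have hmv : Stmt9Aux.TL L F
        = Stmt9Aux.TL L (fun p => Stmt9Aux.chainApp A ((s₁ ++ s₂) ++ [i]) p u) := by
      rw [show F = fun p => Stmt9Aux.chainApp A (s₁ ++ i :: s₂) p u from by rw [hF, ← hsplit]]
      exact Stmt9Aux.move_to_end hlA L u hLfull s₂ s₁ i hnd
    rw [hmv]
    refine Stmt9Aux.TL_vanish_coord ?_ L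
    intro q hq
    rw [Stmt9Aux.chainApp_append]
    have hz : Stmt9Aux.chainApp A [i] q u = 0 := by
      rw [show Stmt9Aux.chainApp A [i] q u = A i (q i) u from rfl]
      exact hn₀ i (q i) hq
    rw [hz, Stmt9Aux.chainApp_zero hlA]
  have hG : ∀ p : Fin l → ℤ, (∑ i, (n₀ i - 1)) + 1 ≤ ∑ i, p i → Stmt9Aux.TL L F p = 0 := by
    intro p hp
    by_contra hne
    have hlt : ∀ i, p i ≤ n₀ i - 1 := by
      intro i
      by_contra hgt
      push_neg at hgt
      exact hne (hcoord i p (by linarith))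
    have hsum := Finset.sum_le_sum (fun i (_ : i ∈ Finset.univ) => hlt i)
    linarith
  have hfin := Stmt9Aux.peel_list hLord hsupp hG
  refine ⟨(∑ i, (n₀ i - 1)) + 1 + L.length, fun p hp => ?_⟩
  have hb := hfin p hp
  rw [List.ofFn_eq_map, Stmt9Aux.bridge (fun i => A i (p i)) u (List.finRange l)]
  exact hb

end VA
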